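/- Under Assumption 4 and the MHFL setup with coverage Γ_k^(n) ≥ 1 at every coordinate, the mask-aware aggregated non-IID gradient bias satisfies ∑_{n=1}^N E‖ (1/Γ_k^(n))·∑_{i∈C_k^(n)} ( ∇F_i^(n)(W_k) − ∇F^(n)(W_k) ) ‖² ≤ ∑_{g=1}^G (|𝒞_g|/Γ*_{g,k}) · f₃(p_{g,k})²·ζ². -/

import Mathlib

open MeasureTheory Finset

noncomputable section

/-- Coordinatewise (Hadamard) product `x ⊙ y` on `ℝ^N`. -/
def had {N : ℕ} (x y : EuclideanSpace ℝ (Fin N)) : EuclideanSpace ℝ (Fin N) :=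
  WithLp.toLp 2 (fun n => x n * y n)

/-- **Lemma 5 (group-aware gradient bias bound under parameter-wise
aggregation).**  In the MHFL setup (binary masks `m i = mg (grp i)`, coverage
sets `Ck n` with `Γ n ≥ 1`, group coverage factor `Γ* g`), under Assumption 4
(bounded masked non-IID bias), the mask-aware aggregated non-IID gradient bias
satisfies
`∑_n E‖(1/Γ^(n))·∑_{i∈C^(n)} (∇F_i^(n)(W_k) − ∇F^(n)(W_k))‖²
  ≤ ∑_g (|𝒞_g|/Γ*_g)·f₃(p_g)²·ζ²`. -/
theorem group_aware_gradient_bias_bound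
    (N C G : ℕ) (hN : 0 < N) (hC : 0 < C) (hG : 0 < G)
    (Ω : Type*) [MeasurableSpace Ω] (μ : Measure Ω) [IsProbabilityMeasure μ]
    (ζ : ℝ) (hζ : 0 ≤ ζ)
    (f₃ : ℝ → ℝ) (hf₃mono : Monotone f₃)
    (hf₃range : ∀ x ∈ Set.Ioc (0:ℝ) 1, f₃ x ∈ Set.Icc (0:ℝ) 1)
    -- masks and groups
    (grp : Fin C → Fin G)
    (mg : Fin G → EuclideanSpace ℝ (Fin N))
    (hmg01 : ∀ g n, mg g n = 0 ∨ mg g n = 1)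
    (m : Fin C → EuclideanSpace ℝ (Fin N))
    (hm : ∀ i, m i = mg (grp i))
    (p : Fin G → ℝ)
    (hp : ∀ g, p g = ((univ.filter fun n => mg g n = 1).card : ℝ) / (N : ℝ))
    (Ck : Fin N → Finset (Fin C))
    (hCk : ∀ n, Ck n = univ.filter fun i => m i n = 1)
    (Γ : Fin N → ℕ) (hΓ : ∀ n, Γ n = (Ck n).card) (hΓ1 : ∀ n, 1 ≤ Γ n)
    (Γstar : Fin G → ℕ)
    (hΓstar : ∀ g, IsLeast {x : ℕ | ∃ n, mg g n = 1 ∧ Γ n = x} (Γstar g))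
    -- differentiable global and local objectives with their gradients
    (F : EuclideanSpace ℝ (Fin N) → ℝ)
    (Fi : Fin C → EuclideanSpace ℝ (Fin N) → ℝ)
    (gradFg : EuclideanSpace ℝ (Fin N) → EuclideanSpace ℝ (Fin N))
    (gradF : Fin C → EuclideanSpace ℝ (Fin N) → EuclideanSpace ℝ (Fin N))
    (hF : ∀ x, HasGradientAt F (gradFg x) x)
    (hFi : ∀ i x, HasGradientAt (Fi i) (gradF i x) x)
    -- global model at round k
    (Wk : EuclideanSpace ℝ (Fin N))
    -- Assumption 4 (bounded masked non-IID bias)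
    (hA4 : ∀ i, ∫ ω, ‖had (gradF i Wk - gradFg Wk) (mg (grp i))‖ ^ 2 ∂μ
      ≤ (f₃ (p (grp i))) ^ 2 * ζ ^ 2) :
    ∑ n : Fin N, ∫ ω,
        ((1 / (Γ n : ℝ)) * ∑ i ∈ Ck n, (gradF i Wk n - gradFg Wk n)) ^ 2 ∂μ
      ≤ ∑ g : Fin G, (((univ.filter fun i => grp i = g).card : ℝ) / (Γstar g : ℝ)) *
          (f₃ (p g)) ^ 2 * ζ ^ 2 := by
  classical
  set d : Fin C → Fin N → ℝ := fun i n => gradF i Wk n - gradFg Wk n with hdd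
  -- kill the (constant) integrals
  have hint : ∀ (c : ℝ), ∫ (_ : Ω), c ∂μ = c := fun c => by
    simp [integral_const]
  simp only [hint]
  -- rephrase Assumption 4 as a sum of squares bound
  have hA4' : ∀ i, ∑ n : Fin N, (d i n * mg (grp i) n) ^ 2
      ≤ (f₃ (p (grp i))) ^ 2 * ζ ^ 2 := by
    intro i
    have h := hA4 i
    rw [hint] at h
    have hnorm : ‖had (gradF i Wk - gradFg Wk) (mg (grp i))‖ ^ 2
        = ∑ n : Fin N, (d i n * mg (grp i) n) ^ 2 := by
      rw [EuclideanSpace.norm_eq, Real.sq_sqrt (by positivity)]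
      refine Finset.sum_congr rfl fun n _ => ?_
      have : had (gradF i Wk - gradFg Wk) (mg (grp i)) n
          = d i n * mg (grp i) n := by
        simp [had, hdd]
      rw [this, Real.norm_eq_abs, sq_abs]
    rwa [hnorm] at h
  -- positivity facts about Γstar
  have hΓstarpos : ∀ g, 0 < (Γstar g : ℝ) := by
    intro g
    obtain ⟨⟨n, _, hn⟩, _⟩ := hΓstar g
    have := hΓ1 n
    exact_mod_cast by omega
  -- step 1: Cauchy–Schwarz at each coordinate
  have step1 : ∀ n : Fin N,
      ((1 / (Γ n : ℝ)) * ∑ i ∈ Ck n, d i n) ^ 2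
        ≤ (1 / (Γ n : ℝ)) * ∑ i ∈ Ck n, (d i n) ^ 2 := by
    intro n
    have hΓpos : 0 < (Γ n : ℝ) := by exact_mod_cast hΓ1 n
    have hcs := sq_sum_le_card_mul_sum_sq (s := Ck n) (f := fun i => d i n)
    rw [← hΓ n] at hcs
    rw [← mul_le_mul_iff_of_pos_right (show (0:ℝ) < (Γ n : ℝ) ^ 2 by positivity)]
    calc ((1 / (Γ n : ℝ)) * ∑ i ∈ Ck n, d i n) ^ 2 * (Γ n : ℝ) ^ 2
        = (∑ i ∈ Ck n, d i n) ^ 2 := by field_simp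
      _ ≤ (Γ n : ℝ) * ∑ i ∈ Ck n, (d i n) ^ 2 := hcs
      _ = (1 / (Γ n : ℝ)) * (∑ i ∈ Ck n, (d i n) ^ 2) * (Γ n : ℝ) ^ 2 := by
          field_simp
  refine le_trans (Finset.sum_le_sum fun n _ => step1 n) ?_
  -- step 2: rewrite as double sum with indicators and swap
  have swap : ∑ n : Fin N, (1 / (Γ n : ℝ)) * ∑ i ∈ Ck n, (d i n) ^ 2
      = ∑ i : Fin C, ∑ n : Fin N,
          (if mg (grp i) n = 1 then (1 / (Γ n : ℝ)) * (d i n) ^ 2 else 0) := by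
    rw [Finset.sum_comm]
    refine Finset.sum_congr rfl fun n _ => ?_
    rw [Finset.mul_sum, hCk n]
    rw [Finset.sum_filter]
    refine Finset.sum_congr rfl fun i _ => ?_
    simp [hm i]
  rw [swap]
  -- step 3: per-client bound
  have step3 : ∀ i : Fin C,
      ∑ n : Fin N, (if mg (grp i) n = 1 then (1 / (Γ n : ℝ)) * (d i n) ^ 2 else 0)
        ≤ (1 / (Γstar (grp i) : ℝ)) * ((f₃ (p (grp i))) ^ 2 * ζ ^ 2) := by
    intro i
    have hle : ∑ n : Fin N, (if mg (grp i) n = 1 then (1 / (Γ n : ℝ)) * (d i n) ^ 2 else 0)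
        ≤ (1 / (Γstar (grp i) : ℝ)) * ∑ n : Fin N, (d i n * mg (grp i) n) ^ 2 := by
      rw [Finset.mul_sum]
      refine Finset.sum_le_sum fun n _ => ?_
      rcases hmg01 (grp i) n with h0 | h1
      · simp [h0]
      · simp only [h1, if_pos, mul_one]
        have hΓs := (hΓstar (grp i)).2 ⟨n, h1, rfl⟩
        have h1' : (1 / (Γ n : ℝ)) ≤ 1 / (Γstar (grp i) : ℝ) := by
          apply one_div_le_one_div_of_le (hΓstarpos (grp i))
          exact_mod_cast hΓs
        exact mul_le_mul_of_nonneg_right h1' (sq_nonneg _)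
    refine hle.trans ?_
    exact mul_le_mul_of_nonneg_left (hA4' i) (by positivity)
  refine le_trans (Finset.sum_le_sum fun i _ => step3 i) ?_
  -- step 4: group the clients
  have hgroup : ∑ i : Fin C, (1 / (Γstar (grp i) : ℝ)) * ((f₃ (p (grp i))) ^ 2 * ζ ^ 2)
      = ∑ g : Fin G, (((univ.filter fun i => grp i = g).card : ℝ) / (Γstar g : ℝ)) *
          (f₃ (p g)) ^ 2 * ζ ^ 2 := by
    rw [← Finset.sum_fiberwise_of_maps_to' (t := (univ : Finset (Fin G)))
      (fun i _ => Finset.mem_univ (grp i))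
      (fun g => (1 / (Γstar g : ℝ)) * ((f₃ (p g)) ^ 2 * ζ ^ 2))]
    refine Finset.sum_congr rfl fun g _ => ?_
    rw [Finset.sum_const, nsmul_eq_mul]
    field_simp
  exact le_of_eq hgroup
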